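/- In the canonical game G(X): for any δ ∈ Ω, any ω ∈ [δ], and any formula with Aφ ∈ ω, we have (i) φ ∈ ω and (ii) there exists ω' ∈ [δ] such that φ ∉ ω'. -/
import Mathlib


/-- Formulae of the language Φ: propositional variables, negation, implication,
the necessity modality `N` (`nec`), and the attacker's blameworthiness modality `A` (`blame`). -/
inductive Formula : Type
  | var : ℕ → Formula
  | neg : Formula → Formula
  | imp : Formula → Formula → Formula
  | nec : Formula → Formula
  | blame : Formula → Formula

namespace Formula

/-- Conjunction, defined through `→` and `¬` in the standard way. -/
def conj (φ ψ : Formula) : Formula := neg (imp φ (neg ψ))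

/-- Disjunction, defined through `→` and `¬` in the standard way. -/
def disj (φ ψ : Formula) : Formula := imp (neg φ) ψ

/-- Biconditional, defined through `→` and `¬` in the standard way. -/
def biimp (φ ψ : Formula) : Formula := conj (imp φ ψ) (imp ψ φ)

/-- `R φ` is an abbreviation for `¬(φ → A φ)`. -/
def R (φ : Formula) : Formula := neg (imp φ (blame φ))

end Formula

/-- A formula is a propositional tautology if it evaluates to true under every
truth assignment that respects `¬` and `→` (treating all other formulae as atoms). -/
def IsTaut (φ : Formula) : Prop :=
  ∀ v : Formula → Bool,
    (∀ ψ, v ψ.neg = !(v ψ)) →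
    (∀ ψ χ, v (ψ.imp χ) = (!(v ψ) || v χ)) →
    v φ = true

/-- Provability `⊢ φ` in the logical system for blameworthiness in security games. -/
inductive Prov : Formula → Prop
  | taut {φ} : IsTaut φ → Prov φ
  | truthN (φ : Formula) : Prov ((φ.nec).imp φ)
  | truthA (φ : Formula) : Prov ((φ.blame).imp φ)
  | negIntro (φ : Formula) : Prov (((φ.nec).neg).imp (((φ.nec).neg).nec))
  | distrib (φ ψ : Formula) : Prov (((φ.imp ψ).nec).imp ((φ.nec).imp (ψ.nec)))
  | unavoid (φ : Formula) : Prov ((φ.nec).imp ((φ.blame).neg))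
  | strictCond (φ ψ : Formula) : Prov (((φ.imp ψ).nec).imp ((ψ.blame).imp (φ.imp (φ.blame))))
  | conjAx (φ ψ : Formula) : Prov (((φ.conj ψ).blame).imp ((φ.blame).disj (ψ.blame)))
  | noBlame (φ : Formula) : Prov (((φ.imp (φ.blame)).blame).neg)
  | mp {φ ψ} : Prov (φ.imp ψ) → Prov φ → Prov ψ
  | necRule {φ} : Prov φ → Prov (φ.nec)

/-- `X ⊢ φ`: provability from the theorems of the logical system together with
additional hypotheses `X`, using only the Modus Ponens rule. -/
inductive ProvFrom (X : Set Formula) : Formula → Prop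
  | hyp {φ} : φ ∈ X → ProvFrom X φ
  | thm {φ} : Prov φ → ProvFrom X φ
  | mp {φ ψ} : ProvFrom X (φ.imp ψ) → ProvFrom X φ → ProvFrom X ψ

/-- A set of formulae is consistent if no contradiction is derivable from it. -/
def Consistent (X : Set Formula) : Prop := ¬ ∃ φ, ProvFrom X φ ∧ ProvFrom X φ.neg

/-- A maximal consistent set of formulae. -/
def MaxConsistent (X : Set Formula) : Prop :=
  Consistent X ∧ ∀ Y, X ⊆ Y → Consistent Y → Y = X

/-- A security game: a set `D` of actions of the defender; for each `d ∈ D` a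
nonempty set `A d` of actions of the attacker in response to `d`; and a valuation
assigning to each propositional variable a set of action profiles `(d, a)`. -/
structure SecurityGame where
  D : Type
  A : D → Type
  nonempty : ∀ d, Nonempty (A d)
  val : ℕ → ∀ d : D, A d → Prop

/-- The satisfaction relation `(d, a) ⊨ φ` of a security game. -/
def Sat (G : SecurityGame) : Formula → ∀ d : G.D, G.A d → Prop
  | .var p, d, a => G.val p d a
  | .neg φ, d, a => ¬ Sat G φ d a
  | .imp φ ψ, d, a => Sat G φ d a → Sat G ψ d a
  | .nec φ, _, _ => ∀ (d' : G.D) (a' : G.A d'), Sat G φ d' a'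
  | .blame φ, d, a => Sat G φ d a ∧ ∃ a' : G.A d, ¬ Sat G φ d a'

/-- The set Ω of the canonical game `G(X)`: all maximal consistent sets of formulae
containing `{φ | N φ ∈ X}`. -/
def canonicalOmega (X : Set Formula) : Set (Set Formula) :=
  {ω | MaxConsistent ω ∧ ∀ φ, φ.nec ∈ X → φ ∈ ω}

/-- The indistinguishability relation `ω ∼ ω'` of the canonical game. -/
def simRel (ω ω' : Set Formula) : Prop := ∀ φ : Formula, φ.R ∈ ω ↔ φ.R ∈ ω'

/-- The `∼`-equivalence class `[δ]` of `δ` inside Ω. -/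
def eqClass (X : Set Formula) (δ : Set Formula) : Set (Set Formula) :=
  {ω ∈ canonicalOmega X | simRel δ ω}

/-- The canonical security game `G(X)`. -/
def canonicalGame (X : Set Formula) : SecurityGame where
  D := canonicalOmega X
  A := fun δ => {ω : canonicalOmega X // simRel δ.val ω.val}
  nonempty := fun δ => ⟨⟨δ, fun _ => Iff.rfl⟩⟩
  val := fun p _ a => Formula.var p ∈ a.val.val

-- ===== tautology schemas =====
open Formula

lemma taut_id (a : Formula) : IsTaut (a.imp a) := by
  intro v hn hi; simp only [hi]; cases v a <;> rfl

lemma taut_S1 (a b : Formula) : IsTaut (b.imp (a.imp b)) := by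
  intro v hn hi; simp only [hi]; cases v a <;> cases v b <;> rfl

lemma taut_S2 (a b c : Formula) :
    IsTaut ((a.imp (b.imp c)).imp ((a.imp b).imp (a.imp c))) := by
  intro v hn hi; simp only [hi]; cases v a <;> cases v b <;> cases v c <;> rfl

/-- (¬a→b) → ((¬a→¬b) → a) -/
lemma taut_S4 (a b : Formula) :
    IsTaut ((a.neg.imp b).imp ((a.neg.imp b.neg).imp a)) := by
  intro v hn hi; simp only [hi, hn]; cases v a <;> cases v b <;> rfl

/-- (n→p) → ((n→¬q) → (n → ¬(p→q)))  : gives Nφ → Rφ -/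
lemma taut_S5 (n p q : Formula) :
    IsTaut ((n.imp p).imp ((n.imp q.neg).imp (n.imp (neg (p.imp q))))) := by
  intro v hn hi; simp only [hi, hn]; cases v n <;> cases v p <;> cases v q <;> rfl

/-- conj closure combine: (z → (¬x → y)) → (¬(a→x) → (¬(b→y) → ¬(a∧b → z))) -/
lemma taut_S6 (a b x y z : Formula) :
    IsTaut ((z.imp ((x.neg).imp y)).imp
      ((neg (a.imp x)).imp ((neg (b.imp y)).imp (neg ((a.conj b).imp z))))) := by
  intro v hn hi
  simp only [Formula.conj, hi, hn]
  cases v a <;> cases v b <;> cases v x <;> cases v y <;> cases v z <;> rfl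

/-- mono combine: (n→(y→(c→x))) → ((n→(c→d)) → (n → (¬(c→x) → ¬(d→y)))) -/
lemma taut_S7 (n c d x y : Formula) :
    IsTaut ((n.imp (y.imp (c.imp x))).imp
      ((n.imp (c.imp d)).imp (n.imp ((neg (c.imp x)).imp (neg (d.imp y)))))) := by
  intro v hn hi
  simp only [hi, hn]
  cases v n <;> cases v c <;> cases v d <;> cases v x <;> cases v y <;> rfl

/-- (x→(y→z)) → ((z→w) → (y→(x→w))) -/
lemma taut_S8 (x y z w : Formula) :
    IsTaut ((x.imp (y.imp z)).imp ((z.imp w).imp (y.imp (x.imp w)))) := by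
  intro v hn hi; simp only [hi]
  cases v x <;> cases v y <;> cases v z <;> cases v w <;> rfl

/-- q → ¬¬(p→q) : gives Aφ → ¬Rφ -/
lemma taut_S9 (p q : Formula) : IsTaut (q.imp (neg (neg (p.imp q)))) := by
  intro v hn hi; simp only [hi, hn]; cases v p <;> cases v q <;> rfl

/-- ¬(p→q) → p : gives Rφ → φ -/
lemma taut_S10 (p q : Formula) : IsTaut ((neg (p.imp q)).imp p) := by
  intro v hn hi; simp only [hi, hn]; cases v p <;> cases v q <;> rfl

/-- p→q ⟹ ¬¬(p→q) (double negation intro) -/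
lemma taut_dni (a : Formula) : IsTaut (a.imp (neg (neg a))) := by
  intro v hn hi; simp only [hi, hn]; cases v a <;> rfl

/-- neg-intro combine for R:
 ¬u → ((m → (s → (p₀ → u))) → (m → ((s → σ) → (σ → ¬(σ → s)))))
 with p₀ := p.imp q, σ := ¬¬p₀. -/
lemma taut_S11 (p q u s m : Formula) :
    IsTaut ((u.neg).imp ((m.imp (s.imp ((p.imp q).imp u))).imp
      (m.imp (((s.imp (neg (neg (p.imp q)))).imp
        ((neg (neg (p.imp q))).imp (neg ((neg (neg (p.imp q))).imp s)))))))) := by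
  intro v hn hi
  simp only [hi, hn]
  cases v p <;> cases v q <;> cases v u <;> cases v s <;> cases v m <;> rfl

/-- (¬a→b) → (¬b→a) -/
lemma taut_S12 (a b : Formula) : IsTaut (((a.neg).imp b).imp ((b.neg).imp a)) := by
  intro v hn hi; simp only [hi, hn]; cases v a <;> cases v b <;> rfl

/-- (a→¬b) → (b→¬a) -/
lemma taut_S13 (a b : Formula) : IsTaut ((a.imp b.neg).imp (b.imp a.neg)) := by
  intro v hn hi; simp only [hi, hn]; cases v a <;> cases v b <;> rfl

/-- (a→b)→((b→c)→((c→d)→(a→d))) -/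
lemma taut_S14 (a b c d : Formula) :
    IsTaut ((a.imp b).imp ((b.imp c).imp ((c.imp d).imp (a.imp d)))) := by
  intro v hn hi; simp only [hi]
  cases v a <;> cases v b <;> cases v c <;> cases v d <;> rfl

-- ===== Prov helpers =====

lemma Prov.mp2 {a b c : Formula} (h : Prov (a.imp (b.imp c)))
    (ha : Prov a) (hb : Prov b) : Prov c := (h.mp ha).mp hb

/-- Nφ → Rφ -/
lemma prov_N_imp_R (φ : Formula) : Prov ((φ.nec).imp φ.R) :=
  Prov.mp2 (Prov.taut (taut_S5 φ.nec φ φ.blame)) (Prov.truthN φ) (Prov.unavoid φ)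

/-- Rφ → (Rψ → R(φ∧ψ)) -/
lemma prov_R_conj (φ ψ : Formula) : Prov (φ.R.imp (ψ.R.imp ((φ.conj ψ).R))) :=
  Prov.mp (Prov.taut (taut_S6 φ ψ φ.blame ψ.blame (φ.conj ψ).blame)) (Prov.conjAx φ ψ)

/-- N(c→d) → (Rc → Rd) -/
lemma prov_R_mono (c d : Formula) : Prov (((c.imp d).nec).imp (c.R.imp d.R)) :=
  Prov.mp2 (Prov.taut (taut_S7 (c.imp d).nec c d c.blame d.blame))
    (Prov.strictCond c d) (Prov.truthN (c.imp d))

/-- K for R: R(a→b) → (Ra → Rb) -/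
lemma prov_R_K (a b : Formula) : Prov (((a.imp b).R).imp (a.R.imp b.R)) := by
  have s1 : Prov (a.R.imp (((a.imp b).R).imp ((a.conj (a.imp b)).R))) :=
    prov_R_conj a (a.imp b)
  have htaut : IsTaut ((a.conj (a.imp b)).imp b) := by
    intro v hn hi; simp only [Formula.conj, hi, hn]; cases v a <;> cases v b <;> rfl
  have s2 : Prov ((((a.conj (a.imp b)).imp b).nec)) := Prov.necRule (Prov.taut htaut)
  have s3 : Prov (((a.conj (a.imp b)).R).imp b.R) := (prov_R_mono _ b).mp s2
  exact Prov.mp2 (Prov.taut (taut_S8 a.R ((a.imp b).R) ((a.conj (a.imp b)).R) b.R)) s1 s3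

/-- Nec for R -/
lemma prov_R_nec {φ : Formula} (h : Prov φ) : Prov φ.R :=
  (prov_N_imp_R φ).mp (Prov.necRule h)

/-- ¬Rφ → R(¬Rφ) : negative introspection for R -/
lemma prov_R_negIntro (φ : Formula) : Prov ((φ.R.neg).imp ((φ.R.neg).R)) := by
  -- ψ₀ := φ.imp φ.blame, σ := ¬¬ψ₀ = φ.R.neg
  have h := Prov.taut (taut_S11 φ φ.blame ((φ.imp φ.blame).blame)
      ((φ.R.neg).blame) (((φ.imp φ.blame).imp (φ.R.neg)).nec))
  have h1 := h.mp (Prov.noBlame φ)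
  have h2 := h1.mp (Prov.strictCond (φ.imp φ.blame) (φ.R.neg))
  have h3 := h2.mp (Prov.necRule (Prov.taut (taut_dni (φ.imp φ.blame))))
  exact h3.mp (Prov.truthA (φ.R.neg))

/-- T for R: Rφ → φ -/
lemma prov_R_T (φ : Formula) : Prov (φ.R.imp φ) := Prov.taut (taut_S10 φ φ.blame)

/-- generic derivation of 4 from T, 5, K, Nec -/
lemma prov_four_of (M : Formula → Formula)
    (hT : ∀ φ, Prov ((M φ).imp φ))
    (h5 : ∀ φ, Prov (((M φ).neg).imp (M ((M φ).neg))))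
    (hK : ∀ φ ψ, Prov ((M (φ.imp ψ)).imp ((M φ).imp (M ψ))))
    (hNec : ∀ φ, Prov φ → Prov (M φ))
    (p : Formula) : Prov ((M p).imp (M (M p))) := by
  set A := (M ((M p).neg)).neg with hA
  have c1 : Prov (A.imp (M p)) :=
    (Prov.taut (taut_S12 (M p) (M ((M p).neg)))).mp (h5 p)
  have c3 : Prov ((M A).imp (M (M p))) := (hK A (M p)).mp (hNec _ c1)
  have c4 : Prov (A.imp (M A)) := h5 ((M p).neg)
  have c5 : Prov ((M p).imp A) :=
    (Prov.taut (taut_S13 (M ((M p).neg)) (M p))).mp (hT ((M p).neg))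
  exact ((((Prov.taut (taut_S14 (M p) A (M A) (M (M p)))).mp c5).mp c4).mp c3)

lemma prov_N_four (p : Formula) : Prov ((p.nec).imp ((p.nec).nec)) :=
  prov_four_of Formula.nec Prov.truthN Prov.negIntro Prov.distrib
    (fun _ => Prov.necRule) p

lemma prov_R_four (p : Formula) : Prov ((p.R).imp ((p.R).R)) :=
  prov_four_of Formula.R prov_R_T prov_R_negIntro prov_R_K
    (fun _ => prov_R_nec) p

-- ===== ProvFrom / MCS infrastructure =====

lemma ProvFrom.mono {X Y : Set Formula} (hXY : X ⊆ Y) {φ} (h : ProvFrom X φ) :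
    ProvFrom Y φ := by
  induction h with
  | hyp h => exact ProvFrom.hyp (hXY h)
  | thm h => exact ProvFrom.thm h
  | mp _ _ ih1 ih2 => exact ProvFrom.mp ih1 ih2

lemma deduction {X : Set Formula} {φ ψ : Formula}
    (h : ProvFrom (insert φ X) ψ) : ProvFrom X (φ.imp ψ) := by
  induction h with
  | @hyp χ h =>
    rcases Set.mem_insert_iff.mp h with rfl | h
    · exact ProvFrom.thm (Prov.taut (taut_id χ))
    · exact ProvFrom.mp (ProvFrom.thm (Prov.taut (taut_S1 φ χ))) (ProvFrom.hyp h)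
  | @thm χ h =>
    exact ProvFrom.mp (ProvFrom.thm (Prov.taut (taut_S1 φ χ))) (ProvFrom.thm h)
  | @mp a b _ _ ih1 ih2 =>
    exact ProvFrom.mp (ProvFrom.mp (ProvFrom.thm (Prov.taut (taut_S2 φ a b))) ih1) ih2

lemma mcs_closed {ω : Set Formula} (hω : MaxConsistent ω) {φ}
    (h : ProvFrom ω φ) : φ ∈ ω := by
  have hred : ∀ χ, ProvFrom (insert φ ω) χ → ProvFrom ω χ := fun χ hc =>
    ProvFrom.mp (deduction hc) h
  have hcons : Consistent (insert φ ω) := by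
    rintro ⟨χ, h1, h2⟩
    exact hω.1 ⟨χ, hred _ h1, hred _ h2⟩
  have := hω.2 (insert φ ω) (Set.subset_insert _ _) hcons
  exact this ▸ Set.mem_insert φ ω

lemma mcs_prov {ω : Set Formula} (hω : MaxConsistent ω) {φ} (h : Prov φ) : φ ∈ ω :=
  mcs_closed hω (ProvFrom.thm h)

lemma mcs_mp {ω : Set Formula} (hω : MaxConsistent ω) {a b : Formula}
    (h1 : a.imp b ∈ ω) (h2 : a ∈ ω) : b ∈ ω :=
  mcs_closed hω (ProvFrom.mp (ProvFrom.hyp h1) (ProvFrom.hyp h2))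

lemma mcs_not_mem_of_neg {ω : Set Formula} (hω : MaxConsistent ω) {φ}
    (h : φ.neg ∈ ω) : φ ∉ ω := fun hmem =>
  hω.1 ⟨φ, ProvFrom.hyp hmem, ProvFrom.hyp h⟩

lemma mcs_neg_of_not_mem {ω : Set Formula} (hω : MaxConsistent ω) {φ}
    (h : φ ∉ ω) : φ.neg ∈ ω := by
  have hcons : Consistent (insert φ.neg ω) := by
    rintro ⟨χ, h1, h2⟩
    have d1 := deduction h1
    have d2 := deduction h2
    have : ProvFrom ω φ :=
      ProvFrom.mp (ProvFrom.mp (ProvFrom.thm (Prov.taut (taut_S4 φ χ))) d1) d2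
    exact h (mcs_closed hω this)
  have := hω.2 (insert φ.neg ω) (Set.subset_insert _ _) hcons
  exact this ▸ Set.mem_insert _ ω

-- ===== Lindenbaum =====

lemma provFrom_chain {c : Set (Set Formula)} (hc : IsChain (· ⊆ ·) c)
    (hne : c.Nonempty) {φ} (h : ProvFrom (⋃₀ c) φ) : ∃ Y ∈ c, ProvFrom Y φ := by
  induction h with
  | hyp h =>
    obtain ⟨Y, hY, hmem⟩ := h
    exact ⟨Y, hY, ProvFrom.hyp hmem⟩
  | thm h =>
    obtain ⟨Y, hY⟩ := hne
    exact ⟨Y, hY, ProvFrom.thm h⟩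
  | mp _ _ ih1 ih2 =>
    obtain ⟨Y1, hY1, p1⟩ := ih1
    obtain ⟨Y2, hY2, p2⟩ := ih2
    rcases eq_or_ne Y1 Y2 with rfl | hne'
    · exact ⟨Y1, hY1, ProvFrom.mp p1 p2⟩
    rcases hc hY1 hY2 hne' with h12 | h21
    · exact ⟨Y2, hY2, ProvFrom.mp (p1.mono h12) p2⟩
    · exact ⟨Y1, hY1, ProvFrom.mp p1 (p2.mono h21)⟩

lemma lindenbaum {X : Set Formula} (h : Consistent X) :
    ∃ ω, X ⊆ ω ∧ MaxConsistent ω := by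
  obtain ⟨m, hXm, hmS, hmax⟩ :=
    zorn_subset_nonempty {Y : Set Formula | Consistent Y}
      (fun c hcS hchain hne => by
        refine ⟨⋃₀ c, ?_, fun s hs => Set.subset_sUnion_of_mem hs⟩
        rintro ⟨χ, h1, h2⟩
        obtain ⟨Y1, hY1, p1⟩ := provFrom_chain hchain hne h1
        obtain ⟨Y2, hY2, p2⟩ := provFrom_chain hchain hne h2
        rcases eq_or_ne Y1 Y2 with rfl | hne'
        · exact hcS hY1 ⟨χ, p1, p2⟩
        rcases hchain hY1 hY2 hne' with h12 | h21
        · exact hcS hY2 ⟨χ, p1.mono h12, p2⟩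
        · exact hcS hY1 ⟨χ, p1, p2.mono h21⟩) X h
  refine ⟨m, hXm, hmS, fun Y hmY hYcons => ?_⟩
  exact (Set.Subset.antisymm (hmax hYcons hmY) hmY)

lemma R_closed {ω : Set Formula} (hω : MaxConsistent ω) {α}
    (h : ProvFrom {β | β.R ∈ ω} α) : α.R ∈ ω := by
  induction h with
  | hyp h => exact h
  | thm h => exact mcs_prov hω (prov_R_nec h)
  | @mp a b _ _ ih1 ih2 =>
    exact mcs_mp hω (mcs_mp hω (mcs_prov hω (prov_R_K a b)) ih1) ih2


/-- In the canonical game `G(X)`: for any `δ ∈ Ω`, any `ω ∈ [δ]`, and any formula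
with `A φ ∈ ω`, we have (i) `φ ∈ ω` and (ii) there exists `ω' ∈ [δ]` with `φ ∉ ω'`. -/
theorem blame_member_canonical (X : Set Formula) (hX : MaxConsistent X)
    (δ : Set Formula) (hδ : δ ∈ canonicalOmega X)
    (ω : Set Formula) (hω : ω ∈ eqClass X δ)
    (φ : Formula) (h : φ.blame ∈ ω) :
    φ ∈ ω ∧ ∃ ω' ∈ eqClass X δ, φ ∉ ω' := by
  obtain ⟨⟨hωM, hωN⟩, hsim⟩ := hω
  have hφω : φ ∈ ω := mcs_mp hωM (mcs_prov hωM (Prov.truthA φ)) h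
  refine ⟨hφω, ?_⟩
  have hnRφ : (φ.R).neg ∈ ω :=
    mcs_mp hωM (mcs_prov hωM (Prov.taut (taut_S9 φ φ.blame))) h
  set W : Set Formula := {β | β.R ∈ ω} with hW
  have hYcons : Consistent (insert φ.neg W) := by
    rintro ⟨χ, h1, h2⟩
    have d1 := deduction h1
    have d2 := deduction h2
    have hPφ : ProvFrom W φ :=
      ProvFrom.mp (ProvFrom.mp (ProvFrom.thm (Prov.taut (taut_S4 φ χ))) d1) d2
    exact hωM.1 ⟨φ.R, ProvFrom.hyp (R_closed hωM hPφ), ProvFrom.hyp hnRφ⟩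
  obtain ⟨ω', hsub, hω'M⟩ := lindenbaum hYcons
  have hWsub : W ⊆ ω' := (Set.subset_insert _ _).trans hsub
  refine ⟨ω', ⟨⟨hω'M, ?_⟩, ?_⟩, ?_⟩
  · intro ψ hψX
    have h4 : (ψ.nec).nec ∈ X := mcs_mp hX (mcs_prov hX (prov_N_four ψ)) hψX
    have hNω : ψ.nec ∈ ω := hωN _ h4
    have hRψ : ψ.R ∈ ω := mcs_mp hωM (mcs_prov hωM (prov_N_imp_R ψ)) hNω
    exact hWsub hRψ
  · intro χ
    rw [hsim χ]
    constructor
    · intro hχ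
      have h2 : (χ.R).R ∈ ω := mcs_mp hωM (mcs_prov hωM (prov_R_four χ)) hχ
      exact hWsub h2
    · intro hχ'
      by_contra hχ
      have hneg : (χ.R).neg ∈ ω := mcs_neg_of_not_mem hωM hχ
      have h2 : ((χ.R).neg).R ∈ ω :=
        mcs_mp hωM (mcs_prov hωM (prov_R_negIntro χ)) hneg
      exact mcs_not_mem_of_neg hω'M (hWsub h2) hχ'
  · exact mcs_not_mem_of_neg hω'M (hsub (Set.mem_insert _ _))
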